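/- Let V be a finite-dimensional normed vector space over ℂ, let S ⊆ V be a bounded and closed subset whose ℂ-linear span is all of V, and let T : V →ₗ[ℂ] V be a linear map with T '' S ⊆ S. Suppose x₀ ∈ S satisfies T x₀ = x₀, that the generalized eigenspace of T for the eigenvalue 1 is exactly the one-dimensional span of x₀, that every eigenvalue μ ≠ 1 of T satisfies |μ| ≤ Δ for some fixed Δ with 0 ≤ Δ < 1, and that the only element of S lying in the ℂ-span of x₀ is x₀ itself. Then for every x ∈ S and every Δ' with Δ < Δ' < 1 there exists a constant C > 0 such that ‖T^k x − x₀‖ ≤ C · Δ'^k for all natural numbers k. -/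

import Mathlib

open Filter Finset

private lemma poly_geom_bound {a b : ℝ} (ha : 0 < a) (hab : a < b) (e : ℕ) :
    ∃ C : ℝ, 0 ≤ C ∧ ∀ k : ℕ, ((k : ℝ) + 1) ^ e * a ^ k ≤ C * b ^ k := by
  have hb : 0 < b := ha.trans hab
  have hq : 0 < a / b := div_pos ha hb
  have hr1 : |a / b| < 1 := by
    rw [abs_of_pos hq]; exact (div_lt_one hb).mpr hab
  have htend : Tendsto (fun n : ℕ => ((n : ℝ)) ^ e * (a / b) ^ n) atTop (nhds 0) :=
    tendsto_pow_const_mul_const_pow_of_abs_lt_one e hr1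
  have htend' : Tendsto (fun k : ℕ => ((k : ℝ) + 1) ^ e * (a / b) ^ (k + 1)) atTop (nhds 0) := by
    refine (htend.comp (tendsto_add_atTop_nat 1)).congr fun k => ?_
    simp only [Function.comp_apply]
    push_cast
    ring
  obtain ⟨C₀, hC₀⟩ := htend'.bddAbove_range
  have hC₀k : ∀ k : ℕ, ((k : ℝ) + 1) ^ e * (a / b) ^ (k + 1) ≤ C₀ := fun k =>
    hC₀ ⟨k, rfl⟩
  refine ⟨C₀ / (a / b), ?_, fun k => ?_⟩
  · have := hC₀k 0
    have h0 : 0 < ((0:ℕ) + 1 : ℝ) ^ e * (a / b) ^ (0 + 1) := by positivity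
    exact le_of_lt (div_pos (lt_of_lt_of_le h0 this) hq)
  · have h1 : ((k : ℝ) + 1) ^ e * (a / b) ^ k ≤ C₀ / (a / b) := by
      rw [le_div_iff₀ hq]
      calc ((k : ℝ) + 1) ^ e * (a / b) ^ k * (a / b)
          = ((k : ℝ) + 1) ^ e * (a / b) ^ (k + 1) := by ring
        _ ≤ C₀ := hC₀k k
    calc ((k : ℝ) + 1) ^ e * a ^ k
        = (((k : ℝ) + 1) ^ e * (a / b) ^ k) * b ^ k := by
          rw [div_pow, mul_assoc, div_mul_cancel₀]
          positivity
      _ ≤ (C₀ / (a / b)) * b ^ k := by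
          apply mul_le_mul_of_nonneg_right h1 (by positivity)

private lemma gen_eigen_decay {V : Type*} [NormedAddCommGroup V] [NormedSpace ℂ V]
    (T : Module.End ℂ V) (μ : ℂ) {Δ' : ℝ} (hμ : ‖μ‖ < Δ')
    (hΔ'1 : Δ' < 1) (w : V) (hw : w ∈ T.maxGenEigenspace μ) :
    ∃ C : ℝ, 0 ≤ C ∧ ∀ k : ℕ, ‖(T ^ k) w‖ ≤ C * Δ' ^ k := by
  have hΔ'0 : 0 < Δ' := lt_of_le_of_lt (norm_nonneg μ) hμ
  set r : ℝ := max (‖μ‖) (Δ' / 2) with hr_def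
  have hr0 : 0 < r := lt_max_of_lt_right (by linarith)
  have hrΔ' : r < Δ' := max_lt hμ (by linarith)
  have hr1 : r ≤ 1 := le_of_lt (hrΔ'.trans hΔ'1)
  have hμr : ‖μ‖ ≤ r := le_max_left _ _
  obtain ⟨d, hd⟩ := (Module.End.mem_maxGenEigenspace T μ w).mp hw
  set N : Module.End ℂ V := T - μ • (1 : Module.End ℂ V) with hN_def
  have hNd : ∀ j, d ≤ j → (N ^ j) w = 0 := by
    intro j hj
    have h1 : N ^ j = N ^ (j - d) * N ^ d := by
      rw [← pow_add]; congr 1; omega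
    rw [h1, Module.End.mul_apply, hd, map_zero]
  have hT : T = μ • (1 : Module.End ℂ V) + N := by rw [hN_def]; abel
  have hcomm : Commute (μ • (1 : Module.End ℂ V)) N := (Commute.one_left N).smul_left μ
  have hexp : ∀ k : ℕ, (T ^ k) w
      = ∑ m ∈ range (k + 1), (μ ^ m * (k.choose m : ℂ)) • ((N ^ (k - m)) w) := by
    intro k
    conv_lhs => rw [hT, hcomm.add_pow k]
    rw [LinearMap.sum_apply]
    refine Finset.sum_congr rfl fun m hm => ?_
    rw [Module.End.mul_apply, Module.End.mul_apply, Module.End.natCast_apply,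
      smul_pow, one_pow, LinearMap.smul_apply, Module.End.one_apply]
    rw [← Nat.cast_smul_eq_nsmul ℂ, map_smul, smul_smul]
  set M : ℝ := ∑ j ∈ range d, ‖(N ^ j) w‖ with hM_def
  have hM0 : 0 ≤ M := Finset.sum_nonneg fun j _ => norm_nonneg _
  have hMj : ∀ j, j < d → ‖(N ^ j) w‖ ≤ M := fun j hj =>
    Finset.single_le_sum (f := fun i => ‖(N ^ i) w‖) (fun i _ => norm_nonneg _)
      (Finset.mem_range.mpr hj)
  obtain ⟨C₀, hC₀0, hC₀⟩ := poly_geom_bound hr0 hrΔ' (d + 1)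
  refine ⟨C₀ * (M / r ^ d), by positivity, fun k => ?_⟩
  have hterm : ∀ m ∈ range (k + 1),
      ‖(μ ^ m * (k.choose m : ℂ)) • ((N ^ (k - m)) w)‖
        ≤ (r ^ k / r ^ d) * (((k : ℝ) + 1) ^ d * M) := by
    intro m hm
    have hmk : m ≤ k := Nat.lt_succ_iff.mp (Finset.mem_range.mp hm)
    by_cases hcase : d ≤ k - m
    · rw [hNd _ hcase, smul_zero, norm_zero]
      positivity
    · push_neg at hcase
      have habs : ‖(μ ^ m * (k.choose m : ℂ)) • ((N ^ (k - m)) w)‖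
          = ‖μ‖ ^ m * (k.choose m : ℝ) * ‖(N ^ (k - m)) w‖ := by
        rw [norm_smul]
        simp [map_mul, map_pow, Complex.norm_natCast]
      rw [habs]
      have h1 : ‖μ‖ ^ m ≤ r ^ k / r ^ d := by
        calc ‖μ‖ ^ m ≤ r ^ m :=
              pow_le_pow_left₀ (norm_nonneg μ) hμr m
          _ ≤ r ^ (k - d) := pow_le_pow_of_le_one hr0.le hr1 (by omega)
          _ ≤ r ^ k / r ^ d := by
              rw [le_div_iff₀ (by positivity), ← pow_add]
              exact pow_le_pow_of_le_one hr0.le hr1 (by omega)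
      have h2 : (k.choose m : ℝ) ≤ ((k : ℝ) + 1) ^ d := by
        have hnat : k.choose m ≤ (k + 1) ^ d := by
          calc k.choose m = k.choose (k - m) := (Nat.choose_symm hmk).symm
            _ ≤ k ^ (k - m) := Nat.choose_le_pow k (k - m)
            _ ≤ (k + 1) ^ (k - m) := Nat.pow_le_pow_left (Nat.le_succ k) _
            _ ≤ (k + 1) ^ d := Nat.pow_le_pow_right (Nat.succ_pos k) (by omega)
        calc (k.choose m : ℝ) ≤ (((k + 1) ^ d : ℕ) : ℝ) := Nat.cast_le.mpr hnat
          _ = ((k : ℝ) + 1) ^ d := by push_cast; ring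
      have h3 : ‖(N ^ (k - m)) w‖ ≤ M := hMj _ hcase
      calc ‖μ‖ ^ m * (k.choose m : ℝ) * ‖(N ^ (k - m)) w‖
          ≤ (r ^ k / r ^ d) * (((k : ℝ) + 1) ^ d) * M := by
            apply mul_le_mul _ h3 (norm_nonneg _) (by positivity)
            exact mul_le_mul h1 h2 (Nat.cast_nonneg _) (by positivity)
        _ = (r ^ k / r ^ d) * (((k : ℝ) + 1) ^ d * M) := by ring
  calc ‖(T ^ k) w‖
      ≤ ∑ m ∈ range (k + 1), ‖(μ ^ m * (k.choose m : ℂ)) • ((N ^ (k - m)) w)‖ := by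
        rw [hexp k]; exact norm_sum_le _ _
    _ ≤ (range (k + 1)).card • ((r ^ k / r ^ d) * (((k : ℝ) + 1) ^ d * M)) :=
        Finset.sum_le_card_nsmul _ _ _ hterm
    _ = (((k : ℝ) + 1) ^ (d + 1) * r ^ k) * (M / r ^ d) := by
        rw [Finset.card_range, nsmul_eq_mul]
        push_cast
        field_simp
        ring
    _ ≤ (C₀ * Δ' ^ k) * (M / r ^ d) :=
        mul_le_mul_of_nonneg_right (hC₀ k) (by positivity)
    _ = (C₀ * (M / r ^ d)) * Δ' ^ k := by ring


/-- **Corollary 2 (abstract form).** Let `T` be a linear endomorphism of a finite-dimensional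
complex normed vector space mapping a bounded closed spanning set `S` into itself. If
`x₀ ∈ S` is a fixed point of `T` whose generalized eigenspace (for the eigenvalue `1`) is
exactly the one-dimensional span of `x₀`, every other eigenvalue has modulus at most
`Δ < 1`, and `x₀` is the only element of `S` in its own span, then iterating `T` on any
element of `S` converges to `x₀` exponentially fast, at any rate `Δ'` with `Δ < Δ' < 1`. -/
theorem iterate_tendsto_fixedPoint_exponentially
    {V : Type*} [NormedAddCommGroup V] [NormedSpace ℂ V] [FiniteDimensional ℂ V]
    (S : Set V) (hSbdd : Bornology.IsBounded S) (hSclosed : IsClosed S)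
    (hSspan : Submodule.span ℂ S = ⊤)
    (T : V →ₗ[ℂ] V) (hTS : T '' S ⊆ S)
    (x₀ : V) (hx₀S : x₀ ∈ S) (hx₀ne : x₀ ≠ 0) (hfix : T x₀ = x₀)
    (hgen : Module.End.maxGenEigenspace T 1 = Submodule.span ℂ {x₀})
    (Δ : ℝ) (hΔ0 : 0 ≤ Δ) (hΔ1 : Δ < 1)
    (heig : ∀ μ : ℂ, μ ≠ 1 → Module.End.HasEigenvalue T μ → ‖μ‖ ≤ Δ)
    (huniq : ∀ y ∈ S, y ∈ Submodule.span ℂ ({x₀} : Set V) → y = x₀) :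
    ∀ x ∈ S, ∀ Δ' : ℝ, Δ < Δ' → Δ' < 1 →
      ∃ C : ℝ, 0 < C ∧ ∀ k : ℕ, ‖(T ^ k) x - x₀‖ ≤ C * Δ' ^ k := by
  intro x hxS Δ' hΔΔ' hΔ'1
  have hΔ'0 : 0 < Δ' := lt_of_le_of_lt hΔ0 hΔΔ'
  set W : Submodule ℂ V :=
    ⨆ μ : ℂ, ⨆ _ : μ ≠ 1, Module.End.maxGenEigenspace T μ with hW_def
  have htop : (⊤ : Submodule ℂ V) ≤ Module.End.maxGenEigenspace T 1 ⊔ W := by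
    rw [← Module.End.iSup_maxGenEigenspace_eq_top (T : Module.End ℂ V)]
    refine iSup_le fun μ => ?_
    by_cases hμ : μ = 1
    · subst hμ; exact le_sup_left
    · refine le_trans ?_ (le_sup_right (a := Module.End.maxGenEigenspace T 1))
      rw [hW_def]
      exact le_trans (le_iSup (fun _ : μ ≠ 1 => Module.End.maxGenEigenspace T μ) hμ)
        (le_iSup (fun μ : ℂ => ⨆ _ : μ ≠ 1, Module.End.maxGenEigenspace T μ) μ)
  obtain ⟨a, ha, w, hwW, hx_eq⟩ := Submodule.mem_sup.mp (htop (Submodule.mem_top (x := x)))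
  have hx₀k : ∀ k : ℕ, (T ^ k) x₀ = x₀ := by
    intro k
    induction k with
    | zero => simp
    | succ n ih => rw [pow_succ, Module.End.mul_apply, hfix, ih]
  have hak : ∀ k : ℕ, (T ^ k) a = a := by
    rw [hgen] at ha
    obtain ⟨c, rfl⟩ := Submodule.mem_span_singleton.mp ha
    intro k
    rw [map_smul, hx₀k]
  have ha' : a ∈ Module.End.maxGenEigenspace T 1 := by
    rw [hgen]
    obtain ⟨c, rfl⟩ := Submodule.mem_span_singleton.mp (by rw [← hgen]; exact ha)
    exact Submodule.smul_mem _ c (Submodule.mem_span_singleton_self x₀)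
  have hwBound : ∃ C : ℝ, 0 ≤ C ∧ ∀ k : ℕ, ‖(T ^ k) w‖ ≤ C * Δ' ^ k := by
    refine Submodule.iSup_induction'
      (p := fun μ : ℂ => ⨆ _ : μ ≠ 1, Module.End.maxGenEigenspace T μ)
      (motive := fun y _ => ∃ C : ℝ, 0 ≤ C ∧ ∀ k : ℕ, ‖(T ^ k) y‖ ≤ C * Δ' ^ k)
      (fun μ y hy => ?_) ⟨0, le_refl 0, by simp⟩
      (fun y z hy hz hCy hCz => ?_) hwW
    · by_cases hμ : μ = 1
      · simp only [iSup_neg (not_not_intro hμ), Submodule.mem_bot] at hy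
        exact ⟨0, le_refl 0, by simp [hy]⟩
      · simp only [iSup_pos hμ] at hy
        by_cases hy0 : y = 0
        · exact ⟨0, le_refl 0, by simp [hy0]⟩
        · have hev : Module.End.HasEigenvalue T μ := by
            apply Module.End.hasEigenvalue_of_hasGenEigenvalue
              (k := Module.finrank ℂ V)
            rw [Module.End.hasGenEigenvalue_iff]
            rw [Module.End.maxGenEigenspace_eq_genEigenspace_finrank] at hy
            exact fun hbot => hy0 (by simpa [hbot] using hy)
          have habs : ‖μ‖ < Δ' := lt_of_le_of_lt (heig μ hμ hev) hΔΔ'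
          exact gen_eigen_decay T μ habs hΔ'1 y hy
    · obtain ⟨C₁, hC₁0, hC₁⟩ := hCy
      obtain ⟨C₂, hC₂0, hC₂⟩ := hCz
      refine ⟨C₁ + C₂, by positivity, fun k => ?_⟩
      calc ‖(T ^ k) (y + z)‖ = ‖(T ^ k) y + (T ^ k) z‖ := by rw [map_add]
        _ ≤ ‖(T ^ k) y‖ + ‖(T ^ k) z‖ := norm_add_le _ _
        _ ≤ C₁ * Δ' ^ k + C₂ * Δ' ^ k := add_le_add (hC₁ k) (hC₂ k)
        _ = (C₁ + C₂) * Δ' ^ k := by ring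
  obtain ⟨C, hC0, hC⟩ := hwBound
  have hTkS : ∀ k : ℕ, (T ^ k) x ∈ S := by
    intro k
    induction k with
    | zero => simpa using hxS
    | succ n ih =>
      rw [pow_succ', Module.End.mul_apply]
      exact hTS ⟨(T ^ n) x, ih, rfl⟩
  have hiter : ∀ k : ℕ, (T ^ k) x = a + (T ^ k) w := by
    intro k
    rw [← hx_eq, map_add, hak k]
  have htendsto : Filter.Tendsto (fun k : ℕ => (T ^ k) x) Filter.atTop (nhds a) := by
    rw [tendsto_iff_norm_sub_tendsto_zero]
    have hg : Filter.Tendsto (fun k : ℕ => C * Δ' ^ k) Filter.atTop (nhds 0) := by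
      have := tendsto_pow_atTop_nhds_zero_of_lt_one hΔ'0.le hΔ'1
      simpa using this.const_mul C
    refine squeeze_zero (fun k => norm_nonneg _) (fun k => ?_) hg
    rw [hiter k]
    simpa using hC k
  have haS : a ∈ S := hSclosed.mem_of_tendsto htendsto
    (Filter.Eventually.of_forall hTkS)
  have ha_span : a ∈ Submodule.span ℂ ({x₀} : Set V) := by rw [← hgen]; exact ha'
  have hax₀ : a = x₀ := huniq a haS ha_span
  refine ⟨C + 1, by positivity, fun k => ?_⟩
  have hsub : (T ^ k) x - x₀ = (T ^ k) w := by rw [hiter k, hax₀]; abel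
  rw [hsub]
  calc ‖(T ^ k) w‖ ≤ C * Δ' ^ k := hC k
    _ ≤ (C + 1) * Δ' ^ k := by
        apply mul_le_mul_of_nonneg_right (by linarith) (by positivity)
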